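/- There exist no integers x, y, z₁, z₂, z₃ such that −2x² − 2y² − 2(z₁²+z₂²+z₃²) + 6xy + (4x+2y)(z₁+z₂+z₃) = 0 and 7x + 4y + z₁ + z₂ + z₃ = 2. -/
import Mathlib


/-- Lemma 4.4: no class `E` in the lattice `𝕃` with `E² = 0` and `E·C = 2`. -/
theorem stmt_5 :
    ¬ ∃ x y z₁ z₂ z₃ : ℤ,
      -2 * x ^ 2 - 2 * y ^ 2 - 2 * (z₁ ^ 2 + z₂ ^ 2 + z₃ ^ 2) + 6 * x * y
        + (4 * x + 2 * y) * (z₁ + z₂ + z₃) = 0 ∧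
      7 * x + 4 * y + z₁ + z₂ + z₃ = 2 := by
  rintro ⟨x, y, z₁, z₂, z₃, h1, h2⟩
  have key : 98 * ((z₁ - z₂) ^ 2 + (z₂ - z₃) ^ 2 + (z₁ - z₃) ^ 2)
      + 2 * (94 * (7 * x - 1) ^ 2 + 92 * (7 * x - 1) * (7 * y - 1)
        + 31 * (7 * y - 1) ^ 2) = 42 := by
    linear_combination (-147) * h1
      + (1274 * x + 686 * y - 98 * z₁ - 98 * z₂ - 98 * z₃ - 196) * h2
  have hne : (7 * x - 1 : ℤ) ≠ 0 := by omega
  have habs : 1 ≤ |7 * x - 1| := Int.one_le_abs hne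
  have hU : (1 : ℤ) ≤ (7 * x - 1) ^ 2 := by
    calc (1 : ℤ) = 1 * 1 := by ring
    _ ≤ |7 * x - 1| * |7 * x - 1| := by
        exact mul_le_mul habs habs (by norm_num) (by positivity)
    _ = (7 * x - 1) ^ 2 := by rw [← sq, sq_abs]
  nlinarith [sq_nonneg (z₁ - z₂), sq_nonneg (z₂ - z₃), sq_nonneg (z₁ - z₃),
    sq_nonneg (46 * (7 * x - 1) + 31 * (7 * y - 1)), hU]
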